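/- For c ∈ B(T), the operator R_c := Σ_{n≥0} (cα)^n(α*c*)^n is a constant satisfying R_c = I + c(αR_cα*)c*; in particular R_c ≥ I (and R_c > 0). -/

import Mathlib

open scoped InnerProductSpace ENNReal
open ContinuousLinearMap (adjoint)

noncomputable section

namespace Multiscale

/-- A homogeneous tree of order `q` with a distinguished boundary point `∞`,
encoded by the `q` primitive shift maps (the right action `t ↦ t·αⱼ`, giving the
`q` successors of a node) together with the parent map (the first step of the
unique path from a node towards the boundary point `∞`).  The axioms say:
the shifts are jointly injective, `t·αⱼ` has parent `t`, every node is a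
successor of its parent, the parent map has no cycles (acyclicity of the tree)
and the paths from any two nodes to `∞` eventually merge (connectedness and the
choice of one common boundary point). -/
structure HomTree (q : ℕ) (T : Type) where
  shift : Fin q → T → T
  parent : T → T
  shift_inj : ∀ i j s t, shift i s = shift j t → i = j ∧ s = t
  parent_shift : ∀ j t, parent (shift j t) = t
  shift_parent : ∀ t, ∃ j, shift j (parent t) = t
  acyclic : ∀ t n, parent^[n] t = t → n = 0
  connected : ∀ s t, ∃ m n, parent^[m] s = parent^[n] t

variable {q : ℕ} {T : Type} [DecidableEq T]

/-- The partial order `s ⪯ t` induced by the boundary point: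
`dist(s, s ∧ t) ≤ dist(t, s ∧ t)`. -/
def HomTree.ple (S : HomTree q T) (s t : T) : Prop :=
  ∃ m n, m ≤ n ∧ S.parent^[m] s = S.parent^[n] t

/-- The horocycle equivalence `s ≍ t` : `dist(s, s ∧ t) = dist(t, s ∧ t)`. -/
def HomTree.horo (S : HomTree q T) (s t : T) : Prop :=
  ∃ n, S.parent^[n] s = S.parent^[n] t

/-- The right action `t ↦ t·w` of a word `w ∈ F_q` on the tree. -/
def HomTree.act (S : HomTree q T) : List (Fin q) → T → T
  | [], t => t
  | i :: w, t => S.act w (S.shift i t)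

/-- `ℓ²(T)`. -/
abbrev L2 (T : Type) : Type := lp (fun _ : T => ℂ) 2

/-- The operator on `ℓ²` associated with a word `w ∈ F_q`, built from the
operators of the primitive shifts: `(w f)(t) = f(t·w)`. -/
def wordOp {q : ℕ} {H : Type} [NormedAddCommGroup H] [NormedSpace ℂ H]
    (A : Fin q → (H →L[ℂ] H)) : List (Fin q) → (H →L[ℂ] H)
  | [] => 1
  | i :: w => A i ∘L wordOp A w

/-- A bounded operator on `ℓ²(T)` is causal if whenever `f` vanishes on
`{t : t ⪯ s}` so does `Xf`. -/
def Causal (S : HomTree q T) (X : L2 T →L[ℂ] L2 T) : Prop :=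
  ∀ s : T, ∀ f : L2 T, (∀ t, S.ple t s → f t = 0) → ∀ t, S.ple t s → X f t = 0

/-- A constant: both `X` and `X*` are causal. -/
def IsConst (S : HomTree q T) (X : L2 T →L[ℂ] L2 T) : Prop :=
  Causal S X ∧ Causal S (adjoint X)

/-- Diagonal with respect to the standard basis `χ_t`. -/
def IsDiagonal (X : L2 T →L[ℂ] L2 T) : Prop :=
  ∀ t : T, ∃ a : ℂ, X (lp.single 2 t 1) = a • lp.single 2 t 1

/-- A pair of words of `F_q` is irreducible if it is not of the form
`(αᵢ v₁, αᵢ v₂)`. -/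
def Irred {q : ℕ} (w₁ w₂ : List (Fin q)) : Prop :=
  ¬ ∃ (i : Fin q) (v₁ v₂ : List (Fin q)), w₁ = i :: v₁ ∧ w₂ = i :: v₂

/-- Membership in the Hilbert--Schmidt class: `trace (X*X) = Σ_t ‖X χ_t‖² < ∞`. -/
def HSSummable (X : L2 T →L[ℂ] L2 T) : Prop :=
  Summable fun t : T => ‖X (lp.single 2 t 1)‖ ^ 2

/-- The Hilbert--Schmidt norm `‖X‖₂ = (trace (X*X))^{1/2}`. -/
def hsNorm (X : L2 T →L[ℂ] L2 T) : ℝ :=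
  Real.sqrt (∑' t : T, ‖X (lp.single 2 t 1)‖ ^ 2)

/-- The Hilbert--Schmidt inner product `⟨X, Y⟩₂ = trace (Y* X)`
(linear in `X`, conjugate-linear in `Y`). -/
def hsInner (X Y : L2 T →L[ℂ] L2 T) : ℂ :=
  ∑' t : T, ⟪Y (lp.single 2 t 1), X (lp.single 2 t 1)⟫_ℂ


open Filter Topology
open scoped NNReal

/-! ### order lemmas -/

lemma ple_parent {S : HomTree q T} {u s : T} {i : Fin q}
    (h : S.ple u (S.shift i s)) : S.ple (S.parent u) s := by
  obtain ⟨m, n, hmn, h⟩ := h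
  rcases n with _ | k
  · interval_cases m
    simp only [Function.iterate_zero, id] at h
    subst h
    exact ⟨0, 0, le_refl 0, by simp [S.parent_shift]⟩
  · have hk : S.parent^[k+1] (S.shift i s) = S.parent^[k] s := by
      rw [Function.iterate_succ_apply, S.parent_shift]
    rw [hk] at h
    rcases m with _ | m'
    · simp only [Function.iterate_zero, id] at h
      subst h
      exact ⟨0, k + 1, Nat.zero_le _, by simp [Function.iterate_succ_apply']⟩
    · refine ⟨m', k, Nat.lt_succ_iff.mp hmn, ?_⟩
      rw [← Function.iterate_succ_apply S.parent m' u]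
      exact h

lemma ple_shift {S : HomTree q T} {t s : T} (i : Fin q)
    (h : S.ple t s) : S.ple (S.shift i t) (S.shift i s) := by
  obtain ⟨m, n, hmn, h⟩ := h
  exact ⟨m + 1, n + 1, Nat.succ_le_succ hmn, by
    rw [Function.iterate_succ_apply, Function.iterate_succ_apply, S.parent_shift,
      S.parent_shift]; exact h⟩

/-! ### coordinate evaluation  -/

lemma coord_eq_inner (t : T) (g : L2 T) : (g t : ℂ) = ⟪lp.single 2 t (1:ℂ), g⟫_ℂ := by
  rw [lp.inner_single_left]; simp [RCLike.inner_apply]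

/-- coordinate evaluation as a continuous linear map. -/
def coordCLM (t : T) : L2 T →L[ℂ] ℂ := innerSL ℂ (lp.single 2 t (1:ℂ))

lemma coordCLM_apply (t : T) (g : L2 T) : coordCLM t g = g t :=
  (coord_eq_inner t g).symm

/-! ### algebra of causal operators -/

lemma causal_zero (S : HomTree q T) : Causal S (0 : L2 T →L[ℂ] L2 T) := by
  intro s f _ t _; simp

lemma causal_one (S : HomTree q T) : Causal S (1 : L2 T →L[ℂ] L2 T) := by
  intro s f hf t ht; simpa using hf t ht

lemma causal_add {S : HomTree q T} {X Y : L2 T →L[ℂ] L2 T}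
    (hX : Causal S X) (hY : Causal S Y) : Causal S (X + Y) := by
  intro s f hf t ht
  have : (X + Y) f = X f + Y f := by simp
  rw [this, lp.coeFn_add, Pi.add_apply, hX s f hf t ht, hY s f hf t ht, add_zero]

lemma causal_comp {S : HomTree q T} {X Y : L2 T →L[ℂ] L2 T}
    (hX : Causal S X) (hY : Causal S Y) : Causal S (X ∘L Y) := by
  intro s f hf t ht
  exact hX s (Y f) (fun u hu => hY s f hf u hu) t ht

lemma causal_sum {S : HomTree q T} {ι : Type*} {A : Finset ι} {g : ι → (L2 T →L[ℂ] L2 T)}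
    (hg : ∀ i ∈ A, Causal S (g i)) : Causal S (∑ i ∈ A, g i) :=
  Finset.sum_induction g (Causal S) (fun _ _ => causal_add) (causal_zero S) hg

lemma isConst_one (S : HomTree q T) : IsConst S (1 : L2 T →L[ℂ] L2 T) := by
  constructor
  · exact causal_one S
  · have : adjoint (1 : L2 T →L[ℂ] L2 T) = 1 := by
      rw [← ContinuousLinearMap.star_eq_adjoint, star_one]
    rw [this]; exact causal_one S

lemma isConst_comp {S : HomTree q T} {X Y : L2 T →L[ℂ] L2 T}
    (hX : IsConst S X) (hY : IsConst S Y) : IsConst S (X ∘L Y) := by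
  refine ⟨causal_comp hX.1 hY.1, ?_⟩
  rw [ContinuousLinearMap.adjoint_comp]
  exact causal_comp hY.2 hX.2

lemma isConst_adjoint {S : HomTree q T} {X : L2 T →L[ℂ] L2 T}
    (hX : IsConst S X) : IsConst S (adjoint X) :=
  ⟨hX.2, by rw [ContinuousLinearMap.adjoint_adjoint]; exact hX.1⟩

lemma isConst_sum {S : HomTree q T} {ι : Type*} {A : Finset ι} {g : ι → (L2 T →L[ℂ] L2 T)}
    (hg : ∀ i ∈ A, IsConst S (g i)) : IsConst S (∑ i ∈ A, g i) := by
  refine ⟨causal_sum fun i hi => (hg i hi).1, ?_⟩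
  have : adjoint (∑ i ∈ A, g i) = ∑ i ∈ A, adjoint (g i) := by
    simp only [← ContinuousLinearMap.star_eq_adjoint]
    exact star_sum A g
  rw [this]
  exact causal_sum fun i hi => (hg i hi).2

/-! ### limits -/

lemma causal_hasSum {S : HomTree q T} {g : ℕ → (L2 T →L[ℂ] L2 T)} {R : L2 T →L[ℂ] L2 T}
    (hg : ∀ n, Causal S (g n)) (hR : HasSum g R) : Causal S R := by
  intro s f hf t ht
  set φ : (L2 T →L[ℂ] L2 T) →L[ℂ] ℂ :=
    (coordCLM t).comp (ContinuousLinearMap.apply ℂ (L2 T) f) with hφ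
  have hval : ∀ Y : L2 T →L[ℂ] L2 T, φ Y = Y f t := by
    intro Y; simp [hφ, coordCLM_apply]
  have h1 : Tendsto (fun A : Finset ℕ => φ (∑ n ∈ A, g n)) atTop (𝓝 (φ R)) :=
    (φ.continuous.tendsto R).comp hR
  have h2 : (fun A : Finset ℕ => φ (∑ n ∈ A, g n)) = fun _ => (0:ℂ) := by
    funext A
    rw [map_sum]
    exact Finset.sum_eq_zero fun n _ => by rw [hval]; exact hg n s f hf t ht
  rw [h2] at h1
  have := tendsto_nhds_unique h1 tendsto_const_nhds
  rw [← hval R, this]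

lemma isConst_hasSum {S : HomTree q T} {g : ℕ → (L2 T →L[ℂ] L2 T)} {R : L2 T →L[ℂ] L2 T}
    (hg : ∀ n, IsConst S (g n)) (hR : HasSum g R) : IsConst S R := by
  refine ⟨causal_hasSum (fun n => (hg n).1) hR, ?_⟩
  have hstar : HasSum (fun n => adjoint (g n)) (adjoint R) := by
    simpa only [ContinuousLinearMap.star_eq_adjoint] using hR.star
  exact causal_hasSum (fun n => (hg n).2) hstar


/-! ### the shift operators -/

section Shifts

variable {S : HomTree q T} {A : Fin q → (L2 T →L[ℂ] L2 T)}
  (hA : ∀ (j : Fin q) (f : L2 T) (t : T), A j f t = f (S.shift j t))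

include hA

lemma A_single (j : Fin q) (u : T) :
    A j (lp.single 2 u (1:ℂ)) =
      if S.shift j (S.parent u) = u then lp.single 2 (S.parent u) (1:ℂ) else 0 := by
  apply lp.ext
  funext t
  rw [hA]
  split_ifs with h
  · by_cases htu : S.shift j t = u
    · have : t = S.parent u := by rw [← htu, S.parent_shift]
      subst this
      rw [htu, lp.single_apply_self, lp.single_apply_self]
    · rw [lp.single_apply_ne _ _ _ htu, lp.single_apply_ne]
      intro hc
      exact htu (by rw [hc]; exact h)
  · have htu : S.shift j t ≠ u := by
      intro hc
      apply h
      rw [← hc, S.parent_shift]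
    rw [lp.single_apply_ne _ _ _ htu]
    rfl

lemma adjoint_A_apply (j : Fin q) (f : L2 T) (u : T) :
    adjoint (A j) f u =
      if S.shift j (S.parent u) = u then f (S.parent u) else 0 := by
  rw [coord_eq_inner u (adjoint (A j) f), ContinuousLinearMap.adjoint_inner_right,
    A_single hA]
  split_ifs with h
  · rw [lp.inner_single_left]; simp [RCLike.inner_apply]
  · simp

lemma causal_shift_conj (i j : Fin q) {K : L2 T →L[ℂ] L2 T} (hK : Causal S K) :
    Causal S (A i ∘L K ∘L adjoint (A j)) := by
  intro s f hf t ht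
  have hvan : ∀ u, S.ple u (S.shift i s) → (adjoint (A j) f) u = 0 := by
    intro u hu
    rw [adjoint_A_apply hA]
    split_ifs with h
    · exact hf _ (ple_parent hu)
    · rfl
  have h2 := hK (S.shift i s) _ hvan
  show ((A i ∘L K ∘L adjoint (A j)) f) t = 0
  simp only [ContinuousLinearMap.comp_apply]
  rw [hA]
  exact h2 _ (ple_shift i ht)

lemma isConst_shift_conj (i j : Fin q) {K : L2 T →L[ℂ] L2 T} (hK : IsConst S K) :
    IsConst S (A i ∘L K ∘L adjoint (A j)) := by
  refine ⟨causal_shift_conj hA i j hK.1, ?_⟩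
  have : adjoint (A i ∘L K ∘L adjoint (A j)) = A j ∘L adjoint K ∘L adjoint (A i) := by
    simp only [ContinuousLinearMap.adjoint_comp, ContinuousLinearMap.adjoint_adjoint]
    rfl
  rw [this]
  exact causal_shift_conj hA j i hK.2

lemma isConst_conj {c : Fin q → (L2 T →L[ℂ] L2 T)} (hc : ∀ j, IsConst S (c j))
    {K : L2 T →L[ℂ] L2 T} (hK : IsConst S K) :
    IsConst S ((∑ j, c j ∘L A j) ∘L K ∘L adjoint (∑ j, c j ∘L A j)) := by
  set X : L2 T →L[ℂ] L2 T := ∑ j, c j ∘L A j with hX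
  have hstar : adjoint X = ∑ j, adjoint (A j) ∘L adjoint (c j) := by
    rw [hX]
    simp only [← ContinuousLinearMap.star_eq_adjoint]
    rw [star_sum]
    refine Finset.sum_congr rfl fun j _ => ?_
    rw [show c j ∘L A j = c j * A j from rfl, star_mul]
    rfl
  have hexp : X ∘L K ∘L adjoint X
      = ∑ i : Fin q, ∑ j : Fin q,
        c i ∘L ((A i ∘L K ∘L adjoint (A j)) ∘L adjoint (c j)) := by
    rw [hstar, hX]
    rw [ContinuousLinearMap.comp_finset_sum, ContinuousLinearMap.finset_sum_comp]
    refine Finset.sum_congr rfl fun i _ => ?_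
    rw [ContinuousLinearMap.comp_finset_sum]
    refine Finset.sum_congr rfl fun j _ => ?_
    simp only [ContinuousLinearMap.comp_assoc]
  rw [hexp]
  refine isConst_sum fun i _ => isConst_sum fun j _ => ?_
  refine isConst_comp (hc i) (isConst_comp ?_ (isConst_adjoint (hc j)))
  exact isConst_shift_conj hA i j hK

end Shifts



set_option maxHeartbeats 1000000 in
/-- For `c ∈ B(T)`, the operator
`R_c = Σ_{n≥0} (cα)ⁿ(α*c*)ⁿ` (norm-absolutely convergent) is a constant
satisfying `R_c = I + c(αR_cα*)c*`; in particular `R_c ≥ I` and `R_c > 0`.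
Here `cα = Σⱼ cⱼαⱼ`, `α*c* = (cα)*`, and `c(αR_cα*)c* = (cα) R_c (cα)*`. -/
theorem Rc_properties {q : ℕ} (hq : 1 ≤ q) {T : Type} [DecidableEq T]
    (S : HomTree q T) (A : Fin q → (L2 T →L[ℂ] L2 T))
    (hA : ∀ (j : Fin q) (f : L2 T) (t : T), A j f t = f (S.shift j t))
    (c : Fin q → (L2 T →L[ℂ] L2 T)) (hc : ∀ j, IsConst S (c j))
    (hrad : spectralRadius ℂ (∑ j, c j ∘L A j) < 1) :
    ∃ R : L2 T →L[ℂ] L2 T,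
      Summable (fun n : ℕ =>
        ‖((∑ j, c j ∘L A j) ^ n) ∘L ((adjoint (∑ j, c j ∘L A j)) ^ n)‖) ∧
      HasSum (fun n : ℕ =>
        ((∑ j, c j ∘L A j) ^ n) ∘L ((adjoint (∑ j, c j ∘L A j)) ^ n)) R ∧
      IsConst S R ∧
      R = 1 + (∑ j, c j ∘L A j) ∘L R ∘L adjoint (∑ j, c j ∘L A j) ∧
      (R - 1).IsPositive ∧ R.IsPositive := by

  set X : L2 T →L[ℂ] L2 T := ∑ j, c j ∘L A j with hXdef
  set g : ℕ → (L2 T →L[ℂ] L2 T) := fun n => (X ^ n) ∘L ((adjoint X) ^ n) with hgdef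
  have hmul : ∀ (P Q : L2 T →L[ℂ] L2 T), P ∘L Q = P * Q := fun _ _ => rfl
  have hadj_pow : ∀ n : ℕ, (adjoint X) ^ n = adjoint (X ^ n) := by
    intro n
    rw [← ContinuousLinearMap.star_eq_adjoint, ← ContinuousLinearMap.star_eq_adjoint, star_pow]
  -- Step 1: geometric bound from the spectral radius
  obtain ⟨r, hr1, hr2⟩ := exists_between hrad
  have hr2' : r ≠ ⊤ := (hr2.trans_le le_top).ne
  have hconv := spectrum.pow_nnnorm_pow_one_div_tendsto_nhds_spectralRadius X
  have hev : ∀ᶠ n : ℕ in atTop, (‖X ^ n‖₊ : ℝ≥0∞) ^ (1 / (n:ℝ)) < r :=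
    hconv.eventually_lt_const hr1
  have hrlt : (r.toNNReal : ℝ) < 1 := by
    have h := ENNReal.coe_toNNReal hr2'
    exact_mod_cast h ▸ hr2
  have hrnn : (0:ℝ) ≤ (r.toNNReal : ℝ) := (r.toNNReal).coe_nonneg
  have hbound : ∀ᶠ n : ℕ in atTop, ‖X ^ n‖ ≤ ((r.toNNReal : ℝ)) ^ n := by
    filter_upwards [hev, eventually_ge_atTop 1] with n hn hn1
    have hpow : (‖X ^ n‖₊ : ℝ≥0∞) ≤ r ^ n := by
      have h1 : ((‖X ^ n‖₊ : ℝ≥0∞) ^ (1 / (n:ℝ))) ^ (n:ℝ) ≤ r ^ (n:ℝ) :=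
        ENNReal.rpow_le_rpow hn.le (Nat.cast_nonneg n)
      have hn0 : (n:ℝ) ≠ 0 := Nat.cast_ne_zero.mpr (Nat.one_le_iff_ne_zero.mp hn1)
      rwa [← ENNReal.rpow_mul, one_div, inv_mul_cancel₀ hn0, ENNReal.rpow_one,
        ENNReal.rpow_natCast] at h1
    have h2 : (‖X ^ n‖₊ : ℝ≥0∞) ≤ ((r.toNNReal : ℝ≥0∞)) ^ n := by
      rwa [ENNReal.coe_toNNReal hr2']
    rw [← ENNReal.coe_pow, ENNReal.coe_le_coe] at h2
    exact_mod_cast h2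
  have hnorm : Summable (fun n : ℕ => ‖g n‖) := by
    refine Summable.of_norm_bounded_eventually_nat
      (g := fun n => (((r.toNNReal : ℝ)) ^ 2) ^ n) ?_ ?_
    · exact summable_geometric_of_lt_one (by positivity) (by nlinarith)
    · filter_upwards [hbound] with n hn
      have h1 : ‖g n‖ ≤ ‖X ^ n‖ * ‖(adjoint X) ^ n‖ := ContinuousLinearMap.opNorm_comp_le _ _
      have h2 : ‖(adjoint X) ^ n‖ = ‖X ^ n‖ := by
        rw [hadj_pow n, ← ContinuousLinearMap.star_eq_adjoint, norm_star]
      rw [Real.norm_eq_abs, abs_norm]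
      calc ‖g n‖ ≤ ‖X ^ n‖ * ‖(adjoint X) ^ n‖ := h1
        _ = ‖X ^ n‖ * ‖X ^ n‖ := by rw [h2]
        _ ≤ ((r.toNNReal : ℝ)) ^ n * ((r.toNNReal : ℝ)) ^ n := by
            apply mul_le_mul hn hn (norm_nonneg _) (by positivity)
        _ = (((r.toNNReal : ℝ)) ^ 2) ^ n := by ring
  have hsummable : Summable g := Summable.of_norm hnorm
  set R : L2 T →L[ℂ] L2 T := ∑' n, g n with hRdef
  have hR : HasSum g R := hsummable.hasSum
  -- structure of the terms
  have hg0 : g 0 = 1 := by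
    simp [hgdef, hmul]
  have hgsucc : ∀ n : ℕ, g (n + 1) = X ∘L g n ∘L adjoint X := by
    intro n
    show (X ^ (n+1)) ∘L ((adjoint X) ^ (n+1)) = _
    rw [hmul, hmul, hmul, pow_succ' X n, pow_succ (adjoint X) n]
    rw [mul_assoc X (X^n), ← mul_assoc (X^n), ← mul_assoc X, mul_assoc]
    rfl
  -- recurrence
  have hsucc_sum : HasSum (fun n => g (n + 1)) (R - 1) := by
    refine (hasSum_nat_add_iff 1).mpr ?_
    rw [Finset.range_one, Finset.sum_singleton, hg0, sub_add_cancel]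
    exact hR
  have hmapped : HasSum (fun n => X ∘L g n ∘L adjoint X) (X ∘L R ∘L adjoint X) := by
    have h := hR.mapL (ContinuousLinearMap.mulLeftRight ℂ _ X (adjoint X))
    have hassoc : ∀ Z : L2 T →L[ℂ] L2 T, X * Z * adjoint X = X ∘L Z ∘L adjoint X := by
      intro Z; rw [hmul, hmul, mul_assoc]
    simpa only [ContinuousLinearMap.mulLeftRight_apply, hassoc] using h
  have key : R - 1 = X ∘L R ∘L adjoint X := by
    refine hsucc_sum.unique ?_
    have h2 : (fun n => g (n + 1)) = fun n => X ∘L g n ∘L adjoint X := funext hgsucc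
    rw [h2]
    exact hmapped
  have heq : R = 1 + X ∘L R ∘L adjoint X := by
    rw [← key]; abel
  -- positivity
  have hpos : ∀ n, (g n).IsPositive := by
    intro n
    have h1 := (ContinuousLinearMap.isPositive_one (E := L2 T)).conj_adjoint (X ^ n)
    have h2 : (X ^ n) ∘L (1 : L2 T →L[ℂ] L2 T) ∘L adjoint (X ^ n) = g n := by
      rw [hmul, hmul, one_mul, hgdef]
      simp only [hadj_pow n, hmul]
    rwa [h2] at h1
  have hSA : IsSelfAdjoint R := by
    have heach : ∀ n, star (g n) = g n := fun n => (hpos n).isSelfAdjoint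
    have h1 : HasSum g (star R) := by
      have := hR.star
      simpa only [heach] using this
    exact (h1.unique hR)
  have hRpos : R.IsPositive := by
    refine ⟨ContinuousLinearMap.isSelfAdjoint_iff_isSymmetric.mp hSA, fun x => ?_⟩
    have h1 : HasSum (fun n => g n x) (R x) := hR.mapL (ContinuousLinearMap.apply ℂ (L2 T) x)
    have h2 : HasSum (fun n => ⟪x, g n x⟫_ℂ) ⟪x, R x⟫_ℂ := h1.mapL (innerSL ℂ x)
    have h3 : HasSum (fun n => RCLike.re ⟪x, g n x⟫_ℂ) (RCLike.re ⟪x, R x⟫_ℂ) :=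
      h2.mapL RCLike.reCLM
    have h4 : 0 ≤ RCLike.re ⟪x, R x⟫_ℂ :=
      hasSum_le (fun n => (hpos n).re_inner_nonneg_right x) hasSum_zero h3
    show 0 ≤ RCLike.re ⟪R x, x⟫_ℂ
    rwa [inner_re_symm]
  have hsub : (R - 1).IsPositive := by
    rw [key]
    exact hRpos.conj_adjoint X
  -- constancy
  have hconstg : ∀ n, IsConst S (g n) := by
    intro n
    induction n with
    | zero => exact hg0 ▸ isConst_one S
    | succ n ih =>
      rw [hgsucc n]
      exact isConst_conj hA hc ih
  exact ⟨R, hnorm, hR, isConst_hasSum hconstg hR, heq, hsub, hRpos⟩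
end Multiscale
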